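/- Let k be a field of characteristic ℓ > 0, α ∈ k with α ∉ 𝔽_ℓ. In the associative k-algebra U generated by x, y, z with relations yz = zy, xy − yx = y, xz − zx = αz, set μ = (α^ℓ − α)^{ℓ−1}, λ = −μ − 1, and c = x^{ℓ²} + λx^ℓ + μx. Then c commutes with x, y and z, hence is central in U. -/
import Mathlib


/-- Let `k` be a field of characteristic `ℓ > 0` and `α ∈ k` with `α ∉ 𝔽_ℓ`
(the prime subfield, i.e. the image of `ℤ` in `k`). In any associative `k`-algebra generated by
elements `x, y, z` with relations `yz = zy`, `xy − yx = y`, `xz − zx = αz` (in particular in the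
enveloping algebra `U(𝔤_α)`), setting `μ = (α^ℓ − α)^{ℓ−1}`, `λ = −μ − 1` and
`c = x^{ℓ²} + λ x^ℓ + μ x`, the element `c` commutes with `x`, `y` and `z`, hence is central. -/
theorem c_central (k : Type*) [Field k] (ℓ : ℕ) (hℓ : ℓ.Prime) [CharP k ℓ]
    (α : k) (hα : ¬ ∃ n : ℤ, (n : k) = α)
    (A : Type*) [Ring A] [Algebra k A] (x y z : A)
    (hyz : y * z = z * y) (hxy : x * y - y * x = y)
    (hxz : x * z - z * x = algebraMap k A α * z) :
    let μ : k := (α ^ ℓ - α) ^ (ℓ - 1)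
    let lam : k := -μ - 1
    let c : A := x ^ (ℓ ^ 2) + algebraMap k A lam * x ^ ℓ + algebraMap k A μ * x
    c * x = x * c ∧ c * y = y * c ∧ c * z = z * c := by
  intro μ lam c
  rcases subsingleton_or_nontrivial A with hA | hA
  · exact ⟨Subsingleton.elim _ _, Subsingleton.elim _ _, Subsingleton.elim _ _⟩
  haveI : Fact ℓ.Prime := ⟨hℓ⟩
  haveI : CharP A ℓ := charP_of_injective_algebraMap (algebraMap k A).injective ℓ
  have key : ∀ (w : A) (a : k), x * w = w * (x + algebraMap k A a) →
      a ^ (ℓ ^ 2) + lam * a ^ ℓ + μ * a = 0 → c * w = w * c := by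
    intro w a hw hzero
    set av : A := algebraMap k A a with hav
    have hcomm : ∀ n : ℕ, x ^ n * w = w * (x + av) ^ n := by
      intro n
      induction n with
      | zero => simp
      | succ n ih =>
        rw [pow_succ', mul_assoc, ih, ← mul_assoc, hw, mul_assoc, ← pow_succ']
    have hxa : Commute x av := (Algebra.commutes a x).symm
    have hpow : (x + av) ^ ℓ = x ^ ℓ + av ^ ℓ := add_pow_char_of_commute _ hxa
    have hpow2 : (x + av) ^ (ℓ ^ 2) = x ^ (ℓ ^ 2) + av ^ (ℓ ^ 2) := by
      exact add_pow_char_pow_of_commute (p := ℓ) (n := 2) hxa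
    have hs : av ^ (ℓ ^ 2) + algebraMap k A lam * av ^ ℓ + algebraMap k A μ * av = 0 := by
      rw [hav, ← map_pow, ← map_pow, ← map_mul, ← map_mul, ← map_add, ← map_add, hzero,
        map_zero]
    have step1 : c * w = w * ((x + av) ^ (ℓ ^ 2) + algebraMap k A lam * (x + av) ^ ℓ +
        algebraMap k A μ * (x + av)) := by
      have h1 : x * w = w * (x + av) := hw
      calc c * w
          = x ^ (ℓ ^ 2) * w + algebraMap k A lam * (x ^ ℓ * w) +
            algebraMap k A μ * (x * w) := by
            simp only [c, add_mul, mul_assoc]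
        _ = w * (x + av) ^ (ℓ ^ 2) + algebraMap k A lam * (w * (x + av) ^ ℓ) +
            algebraMap k A μ * (w * (x + av)) := by rw [hcomm, hcomm, h1]
        _ = w * (x + av) ^ (ℓ ^ 2) + w * (algebraMap k A lam * (x + av) ^ ℓ) +
            w * (algebraMap k A μ * (x + av)) := by
            rw [← mul_assoc, ← mul_assoc, Algebra.commutes lam w, Algebra.commutes μ w,
              mul_assoc, mul_assoc]
        _ = _ := by simp only [mul_add]
    rw [step1, hpow, hpow2]
    congr 1
    have expand : x ^ (ℓ ^ 2) + av ^ (ℓ ^ 2) +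
        algebraMap k A lam * (x ^ ℓ + av ^ ℓ) + algebraMap k A μ * (x + av)
        = (x ^ (ℓ ^ 2) + algebraMap k A lam * x ^ ℓ + algebraMap k A μ * x) +
          (av ^ (ℓ ^ 2) + algebraMap k A lam * av ^ ℓ + algebraMap k A μ * av) := by
      rw [mul_add, mul_add]; abel
    rw [expand, hs, add_zero]
  have hx : c * x = x * c := by
    apply key x 0
    · simp
    · simp [zero_pow hℓ.ne_zero, zero_pow (pow_ne_zero 2 hℓ.ne_zero)]
  have hy : c * y = y * c := by
    apply key y 1
    · rw [sub_eq_iff_eq_add] at hxy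
      rw [map_one, mul_add, mul_one, hxy, add_comm]
    · show (1:k) ^ (ℓ ^ 2) + (-(α ^ ℓ - α) ^ (ℓ - 1) - 1) * 1 ^ ℓ + (α ^ ℓ - α) ^ (ℓ - 1) * 1 = 0
      ring
  have hz : c * z = z * c := by
    apply key z α
    · rw [sub_eq_iff_eq_add] at hxz
      rw [mul_add, ← Algebra.commutes α z, hxz, add_comm]
    · have frob : (α ^ ℓ - α) ^ ℓ = α ^ (ℓ ^ 2) - α ^ ℓ := by
        rw [sub_pow_char, ← pow_mul, sq]
      have hβ : (α ^ ℓ - α) ^ (ℓ - 1) * (α ^ ℓ - α) = (α ^ ℓ - α) ^ ℓ := by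
        rw [← pow_succ, Nat.sub_add_cancel hℓ.one_lt.le]
      show α ^ (ℓ ^ 2) + (-(α ^ ℓ - α) ^ (ℓ - 1) - 1) * α ^ ℓ + (α ^ ℓ - α) ^ (ℓ - 1) * α = 0
      linear_combination -frob - hβ
  exact ⟨hx, hy, hz⟩
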